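/- External choices on inputs can be extended under the subcontract relation for output persistent contracts: a+b ⪯ a, for any distinct input action names a and b. -/
import Mathlib


/-!
Formalization of choreographies, orchestrations and behavioural contracts
following Bravetti–Zavattaro, "Choreographies and Behavioural Contracts on
the Way to Dynamic Updates".
-/

/-- Action names (a denumerable set). -/
abbrev AName := ℕ
/-- Roles. -/
abbrev Role := ℕ

/-! ### The choreography calculus -/

/-- Choreographies, including the auxiliary terms `one` (successful completion)
and `zero` (halt). -/
inductive Chor : Type
  | comm : AName → Role → Role → Chor      -- a_{r→s}
  | choice : Chor → Chor → Chor
  | seq : Chor → Chor → Chor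
  | par : Chor → Chor → Chor
  | star : Chor → Chor
  | one : Chor
  | zero : Chor
  deriving DecidableEq

/-- Labels of the choreography semantics: interactions `a_{r→s}` and `√`. -/
inductive CLabel : Type
  | comm : AName → Role → Role → CLabel
  | tick : CLabel
  deriving DecidableEq

/-- Operational semantics of choreographies. -/
inductive CStep : Chor → CLabel → Chor → Prop
  | comm : CStep (.comm a r s) (.comm a r s) .one
  | one : CStep .one .tick .zero
  | starTick : CStep (.star H) .tick .zero
  | choiceL : CStep H η H' → CStep (.choice H L) η H'
  | choiceR : CStep L η L' → CStep (.choice H L) η L'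
  | seqL : CStep H η H' → η ≠ .tick → CStep (.seq H L) η (.seq H' L)
  | seqTick : CStep H .tick H' → CStep L η L' → CStep (.seq H L) η L'
  | parL : CStep H η H' → η ≠ .tick → CStep (.par H L) η (.par H' L)
  | parR : CStep L η L' → η ≠ .tick → CStep (.par H L) η (.par H L')
  | parTick : CStep H .tick H' → CStep L .tick L' → CStep (.par H L) .tick (.par H' L')
  | starStep : CStep H η H' → η ≠ .tick → CStep (.star H) η (.seq H' (.star H))

/-- Roles syntactically occurring in a choreography. -/
def rolesC : Chor → Finset Role
  | .comm _ r s => {r, s}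
  | .choice H L | .seq H L | .par H L => rolesC H ∪ rolesC L
  | .star H => rolesC H
  | .one | .zero => ∅

/-- Action names syntactically occurring in a choreography. -/
def namesC : Chor → Finset AName
  | .comm a _ _ => {a}
  | .choice H L | .seq H L | .par H L => namesC H ∪ namesC L
  | .star H => namesC H
  | .one | .zero => ∅

/-! ### The orchestration calculus -/

/-- Orchestrations (also used as behavioural contract terms). -/
inductive Orc : Type
  | zero : Orc
  | one : Orc
  | tau : Orc
  | inp : AName → Orc              -- receive a
  | out : AName → Role → Orc       -- invoke ā directed to role l
  | seq : Orc → Orc → Orc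
  | choice : Orc → Orc → Orc
  | par : Orc → Orc → Orc
  | star : Orc → Orc
  deriving DecidableEq

/-- Labels of the orchestration/contract semantics. -/
inductive OLabel : Type
  | tau : OLabel
  | inp : AName → OLabel
  | out : AName → Role → OLabel
  | tick : OLabel
  deriving DecidableEq

/-- Operational semantics of orchestrations/contracts. -/
inductive OStep : Orc → OLabel → Orc → Prop
  | one : OStep .one .tick .zero
  | tau : OStep .tau .tau .one
  | inp : OStep (.inp a) (.inp a) .one
  | out : OStep (.out a l) (.out a l) .one
  | choiceL : OStep C μ C' → OStep (.choice C D) μ C'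
  | choiceR : OStep D μ D' → OStep (.choice C D) μ D'
  | seqL : OStep C μ C' → μ ≠ .tick → OStep (.seq C D) μ (.seq C' D)
  | seqTick : OStep C .tick C' → OStep D μ D' → OStep (.seq C D) μ D'
  | parL : OStep C μ C' → μ ≠ .tick → OStep (.par C D) μ (.par C' D)
  | parR : OStep D μ D' → μ ≠ .tick → OStep (.par C D) μ (.par C D')
  | parTick : OStep C .tick C' → OStep D .tick D' → OStep (.par C D) .tick (.par C' D')
  | starTick : OStep (.star C) .tick .zero
  | starStep : OStep C μ C' → μ ≠ .tick → OStep (.star C) μ (.seq C' (.star C))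

/-! ### Systems (compositions of located orchestrations/contracts) -/

/-- Systems: parallel compositions of located orchestrations `[C]_l`. -/
inductive Sys : Type
  | atom : Orc → Role → Sys
  | par : Sys → Sys → Sys
  deriving DecidableEq

/-- Labels of the system semantics. -/
inductive SLabel : Type
  | tau : SLabel
  | inp : AName → Role → SLabel            -- a_s
  | out : AName → Role → Role → SLabel     -- ā_{r s}
  | comm : AName → Role → Role → SLabel    -- a_{r→s}
  | tick : SLabel
  deriving DecidableEq

/-- Operational semantics of systems. -/
inductive SStep : Sys → SLabel → Sys → Prop
  | atomTau : OStep C .tau C' → SStep (.atom C r) .tau (.atom C' r)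
  | atomInp : OStep C (.inp a) C' → SStep (.atom C r) (.inp a r) (.atom C' r)
  | atomOut : OStep C (.out a s) C' → SStep (.atom C r) (.out a r s) (.atom C' r)
  | atomTick : OStep C .tick C' → SStep (.atom C r) .tick (.atom C' r)
  | parL : SStep P μ P' → μ ≠ .tick → SStep (.par P Q) μ (.par P' Q)
  | parR : SStep Q μ Q' → μ ≠ .tick → SStep (.par P Q) μ (.par P Q')
  | commLR : SStep P (.out a r s) P' → SStep Q (.inp a s) Q' →
      SStep (.par P Q) (.comm a r s) (.par P' Q')
  | commRL : SStep P (.inp a s) P' → SStep Q (.out a r s) Q' →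
      SStep (.par P Q) (.comm a r s) (.par P' Q')
  | parTick : SStep P .tick P' → SStep Q .tick Q' → SStep (.par P Q) .tick (.par P' Q')

/-- One step of a completely specified system: an internal `τ` step or a
completed interaction `a_{r→s}`. -/
def CompleteStep (P P' : Sys) : Prop :=
  SStep P .tau P' ∨ ∃ a r s, SStep P (.comm a r s) P'

/-- Reachability through complete (τ / completed-interaction) steps. -/
inductive Reach : Sys → Sys → Prop
  | refl (P) : Reach P P
  | step : CompleteStep P P' → Reach P' P'' → Reach P P''

/-- `P` can perform the successful-termination label `√`. -/
def CanTick (P : Sys) : Prop := ∃ P', SStep P .tick P'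

/-- Correct composition `P↓`: every reachable state can reach a state able to
perform `√`. -/
def Correct (P : Sys) : Prop :=
  ∀ P', Reach P P' → ∃ P'', Reach P' P'' ∧ CanTick P''

/-- `WTrace P w` is the weak transition `P ⇒^{w√}`: `P` performs the sequence
`w` of completed interactions `a_{r→s}` (absorbing `τ` steps) and then `√`. -/
inductive WTrace : Sys → List (AName × Role × Role) → Prop
  | tick : CanTick P → WTrace P []
  | tau : SStep P .tau P' → WTrace P' w → WTrace P w
  | comm : SStep P (.comm a r s) P' → WTrace P' w → WTrace P ((a, r, s) :: w)

/-- `CTrace H w` is the transition sequence `H →^{w√}`. -/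
inductive CTrace : Chor → List (AName × Role × Role) → Prop
  | tick : CStep H .tick H' → CTrace H []
  | comm : CStep H (.comm a r s) H' → CTrace H' w → CTrace H ((a, r, s) :: w)

/-- `P` implements `H` (written `P ∝ H`): `P` is a correct composition and all
its conversations (followed by `√`) are admitted by `H`. -/
def Implements (P : Sys) (H : Chor) : Prop :=
  Correct P ∧ ∀ w, WTrace P w → CTrace H w

/-! ### Projection and well-formedness -/

/-- Projection of a choreography on a role (homomorphic over all operators). -/
def proj : Chor → Role → Orc
  | .comm a r s, t => if t = r then .out a s else if t = s then .inp a else .one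
  | .choice H L, t => .choice (proj H t) (proj L t)
  | .seq H L, t => .seq (proj H t) (proj L t)
  | .par H L, t => .par (proj H t) (proj L t)
  | .star H, t => .star (proj H t)
  | .one, _ => .one
  | .zero, _ => .zero

/-- Parallel composition of a list of located contracts
`[C_1]_{l_1} || … || [C_n]_{l_n}`. -/
def composeC : List (Orc × Role) → Sys
  | [] => .atom .one 0
  | [(C, l)] => .atom C l
  | (C, l) :: x :: xs => .par (.atom C l) (composeC (x :: xs))

/-- Well-formed choreography: the system obtained by projecting `H` on all its
roles implements `H` (for any enumeration of its roles). -/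
def WellFormed (H : Chor) : Prop :=
  ∀ L : List Role, L.Nodup → L.toFinset = rolesC H →
    Implements (composeC (L.map fun r => (proj H r, r))) H

/-! ### Behavioural contracts: basic notions -/

/-- Roles targeted by output actions syntactically occurring in a contract. -/
def oroles : Orc → Finset Role
  | .out _ l => {l}
  | .seq C D | .choice C D | .par C D => oroles C ∪ oroles D
  | .star C => oroles C
  | _ => ∅

/-- Input action names syntactically occurring in a contract: `I(C)`. -/
def inames : Orc → Finset AName
  | .inp a => {a}
  | .seq C D | .choice C D | .par C D => inames C ∪ inames D
  | .star C => inames C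
  | _ => ∅

/-- `C \\ M`: replace every input on a name in `M` occurring in `C` by `0`. -/
def restrict (C : Orc) (M : Finset AName) : Orc :=
  match C with
  | .inp a => if a ∈ M then .zero else .inp a
  | .seq C D => .seq (restrict C M) (restrict D M)
  | .choice C D => .choice (restrict C M) (restrict D M)
  | .par C D => .par (restrict C M) (restrict D M)
  | .star C => .star (restrict C M)
  | C => C

/-- Reachability in the contract LTS (through any labels). -/
inductive OReach : Orc → Orc → Prop
  | refl (C) : OReach C C
  | step : OStep C μ C' → OReach C' C'' → OReach C C''

/-- Output persistence: once a contract decides to execute an output, its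
actual execution is mandatory to reach successful termination. -/
def OutputPersistent (C : Orc) : Prop :=
  ∀ C', OReach C C' → ∀ a l, (∃ D, OStep C' (.out a l) D) →
    (¬ ∃ D, OStep C' .tick D) ∧
    (∀ μ C'', OStep C' μ C'' → μ ≠ .out a l → ∃ D, OStep C'' (.out a l) D)

/-- The list of roles of the located contracts occurring in a system. -/
def rolesList : Sys → List Role
  | .atom _ r => [r]
  | .par P Q => rolesList P ++ rolesList Q

/-- No contract sends outputs to its own role. -/
def NoSelfOut : Sys → Prop
  | .atom C r => r ∉ oroles C
  | .par P Q => NoSelfOut P ∧ NoSelfOut Q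

/-- Well-formed system: pairwise distinct roles, no output to one's own role. -/
def WFSys (P : Sys) : Prop := (rolesList P).Nodup ∧ NoSelfOut P

/-- All contracts occurring in the system are output persistent. -/
def AllOP : Sys → Prop
  | .atom C _ => OutputPersistent C
  | .par P Q => AllOP P ∧ AllOP Q

/-- The subcontract relation `C' ⪯ C` (compliance testing): for every fresh
role `l` and every test composition `P` of output persistent contracts not
using `l`, correctness of `[C]_l || P` implies correctness of `[C']_l || P`. -/
def Subcontract (C' C : Orc) : Prop :=
  ∀ l : Role, l ∉ oroles C ∪ oroles C' →
    ∀ P : Sys, AllOP P → WFSys P → l ∉ rolesList P →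
      Correct (.par (.atom C l) P) → Correct (.par (.atom C' l) P)

/-- Independent subcontract pre-order over output persistent contracts:
a pre-order such that refining any number of contracts of a correct system
independently preserves correctness. -/
def IndepSubcontractPre (le : Orc → Orc → Prop) : Prop :=
  (∀ C, OutputPersistent C → le C C) ∧
  (∀ C₁ C₂ C₃, OutputPersistent C₁ → OutputPersistent C₂ → OutputPersistent C₃ →
      le C₁ C₂ → le C₂ C₃ → le C₁ C₃) ∧
  (∀ L : List (Orc × Orc × Role), L ≠ [] →
    (∀ x ∈ L, OutputPersistent x.1 ∧ OutputPersistent x.2.1 ∧ le x.2.1 x.1) →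
    (L.map fun x => x.2.2).Nodup →
    (∀ x ∈ L, x.2.2 ∉ oroles x.1 ∪ oroles x.2.1) →
    Correct (composeC (L.map fun x => (x.1, x.2.2))) →
    Correct (composeC (L.map fun x => (x.2.1, x.2.2))))

/-- An uncontrollable contract: no test composition can lead it to success. -/
def Uncontrollable (C : Orc) : Prop :=
  ¬ ∃ (l : Role) (P : Sys), l ∉ oroles C ∧ AllOP P ∧ WFSys P ∧ l ∉ rolesList P ∧
      Correct (.par (.atom C l) P)

/-- Weak traces of a contract: sequences of visible labels, absorbing `τ`. -/
inductive WOTrace : Orc → List OLabel → Prop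
  | nil (C) : WOTrace C []
  | tau : OStep C .tau C' → WOTrace C' w → WOTrace C w
  | vis : OStep C μ C' → μ ≠ .tau → WOTrace C' w → WOTrace C (μ :: w)

/-! ### Should-testing (fair testing) à la Rensink–Vogler -/

/-- Labels of tests: internal moves, synchronization with a (visible) action of
the tested contract (`√` included as any other action), and test success `√'`. -/
inductive TLab : Type
  | tau : TLab
  | sync : OLabel → TLab
  | succ : TLab

/-- A test: a labelled transition system over `TLab`. -/
structure TestLTS where
  S : Type
  step : S → TLab → S → Prop
  init : S

/-- Steps of a contract/test configuration. -/
inductive TCStep (T : TestLTS) : (Orc × T.S) → (Orc × T.S) → Prop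
  | ctau : OStep C .tau C' → TCStep T (C, t) (C', t)
  | ttau : T.step t .tau t' → TCStep T (C, t) (C, t')
  | sync : OStep C μ C' → μ ≠ OLabel.tau → T.step t (.sync μ) t' → TCStep T (C, t) (C', t')

/-- Reachability of configurations. -/
inductive TCReach (T : TestLTS) : (Orc × T.S) → (Orc × T.S) → Prop
  | refl (c) : TCReach T c c
  | step : TCStep T c c' → TCReach T c' c'' → TCReach T c c''

/-- `C` should-passes `T`: from every reachable configuration a configuration
in which the test can perform the success action is reachable. -/
def Shd (C : Orc) (T : TestLTS) : Prop :=
  ∀ c, TCReach T (C, T.init) c → ∃ c', TCReach T c c' ∧ ∃ t', T.step c'.2 .succ t'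

/-- The should-testing (fair testing) pre-order: `ShouldPre C' C` holds iff
every test that `C` should-passes is also should-passed by `C'`. -/
def ShouldPre (C' C : Orc) : Prop := ∀ T : TestLTS, Shd C T → Shd C' T

/-- The normal form `NF(C)`: the recursive-equations presentation of the LTS of
`C`.  Since contracts are here represented directly by LTS-denoting terms and
the should-testing pre-order only depends on the underlying LTS, the normal
form is the term itself. -/
def NF (C : Orc) : Orc := C


/-! ### Auxiliary lemmas for Statement 8 -/

lemma op_ostep {C C' : Orc} {μ : OLabel} (h : OutputPersistent C) (hs : OStep C μ C') :
    OutputPersistent C' := fun D hr => h D (.step hs hr)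

lemma allop_sstep : ∀ {Q Q' : Sys} {μ : SLabel}, SStep Q μ Q' → AllOP Q → AllOP Q' := by
  intro Q Q' μ hs
  induction hs with
  | atomTau h => exact fun hA => op_ostep hA h
  | atomInp h => exact fun hA => op_ostep hA h
  | atomOut h => exact fun hA => op_ostep hA h
  | atomTick h => exact fun hA => op_ostep hA h
  | parL _ _ ih => exact fun hA => ⟨ih hA.1, hA.2⟩
  | parR _ _ ih => exact fun hA => ⟨hA.1, ih hA.2⟩
  | commLR _ _ ih1 ih2 => exact fun hA => ⟨ih1 hA.1, ih2 hA.2⟩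
  | commRL _ _ ih1 ih2 => exact fun hA => ⟨ih1 hA.1, ih2 hA.2⟩
  | parTick _ _ ih1 ih2 => exact fun hA => ⟨ih1 hA.1, ih2 hA.2⟩

lemma roles_sstep : ∀ {Q Q' : Sys} {μ : SLabel}, SStep Q μ Q' → rolesList Q' = rolesList Q := by
  intro Q Q' μ hs
  induction hs with
  | atomTau _ => rfl
  | atomInp _ => rfl
  | atomOut _ => rfl
  | atomTick _ => rfl
  | parL _ _ ih => simp [rolesList, ih]
  | parR _ _ ih => simp [rolesList, ih]
  | commLR _ _ ih1 ih2 => simp [rolesList, ih1, ih2]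
  | commRL _ _ ih1 ih2 => simp [rolesList, ih1, ih2]
  | parTick _ _ ih1 ih2 => simp [rolesList, ih1, ih2]

lemma inp_role : ∀ {Q Q' : Sys} {μ : SLabel}, SStep Q μ Q' →
    ∀ a s, μ = .inp a s → s ∈ rolesList Q := by
  intro Q Q' μ hs
  induction hs with
  | atomInp _ => intro a s he; cases he; simp [rolesList]
  | parL _ _ ih =>
      intro a s he
      simp only [rolesList, List.mem_append]
      exact Or.inl (ih a s he)
  | parR _ _ ih =>
      intro a s he
      simp only [rolesList, List.mem_append]
      exact Or.inr (ih a s he)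
  | atomTau _ => intro a s he; cases he
  | atomOut _ => intro a s he; cases he
  | atomTick _ => intro a s he; cases he
  | commLR _ _ _ _ => intro a s he; cases he
  | commRL _ _ _ _ => intro a s he; cases he
  | parTick _ _ _ _ => intro a s he; cases he

lemma not_mem_left {l : Role} {Q1 Q2 : Sys} (h : l ∉ rolesList (.par Q1 Q2)) :
    l ∉ rolesList Q1 := by
  intro hm; exact h (by simp only [rolesList, List.mem_append]; exact Or.inl hm)

lemma not_mem_right {l : Role} {Q1 Q2 : Sys} (h : l ∉ rolesList (.par Q1 Q2)) :
    l ∉ rolesList Q2 := by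
  intro hm; exact h (by simp only [rolesList, List.mem_append]; exact Or.inr hm)

lemma out_pres {b : AName} {l : Role} :
    ∀ {Q Q' : Sys} {μ : SLabel}, SStep Q μ Q' →
      AllOP Q → l ∉ rolesList Q → (∃ r Qb, SStep Q (.out b r l) Qb) →
      (∀ r, μ ≠ .out b r l) → μ ≠ .inp b l →
      ∃ r Qb, SStep Q' (.out b r l) Qb := by
  intro Q Q' μ hs
  induction hs with
  | atomTau h =>
      intro hA hl hen _ _
      obtain ⟨r, Qb, he⟩ := hen
      cases he with
      | atomOut h2 =>
          obtain ⟨D, hD⟩ :=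
            ((show OutputPersistent _ from hA) _ (.refl _) b l ⟨_, h2⟩).2 _ _ h
              (fun h' => nomatch h')
          exact ⟨_, _, .atomOut hD⟩
  | atomInp h =>
      intro hA hl hen _ _
      obtain ⟨r, Qb, he⟩ := hen
      cases he with
      | atomOut h2 =>
          obtain ⟨D, hD⟩ :=
            ((show OutputPersistent _ from hA) _ (.refl _) b l ⟨_, h2⟩).2 _ _ h
              (fun h' => nomatch h')
          exact ⟨_, _, .atomOut hD⟩
  | atomOut h =>
      intro hA hl hen hout _
      obtain ⟨r, Qb, he⟩ := hen
      cases he with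
      | atomOut h2 =>
          obtain ⟨D, hD⟩ :=
            ((show OutputPersistent _ from hA) _ (.refl _) b l ⟨_, h2⟩).2 _ _ h
              (by intro heq; cases heq; exact hout _ rfl)
          exact ⟨_, _, .atomOut hD⟩
  | atomTick h =>
      intro hA hl hen _ _
      obtain ⟨r, Qb, he⟩ := hen
      cases he with
      | atomOut h2 =>
          exact absurd ⟨_, h⟩ ((show OutputPersistent _ from hA) _ (.refl _) b l ⟨_, h2⟩).1
  | parL hsub hnet ih =>
      intro hA hl hen hout hinp
      obtain ⟨r, Qb, he⟩ := hen
      cases he with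
      | parL e _ =>
          obtain ⟨r', Qb', e'⟩ := ih hA.1 (not_mem_left hl) ⟨r, _, e⟩ hout hinp
          exact ⟨r', _, .parL e' (fun h' => nomatch h')⟩
      | parR e _ =>
          exact ⟨r, _, .parR e (fun h' => nomatch h')⟩
  | parR hsub hnet ih =>
      intro hA hl hen hout hinp
      obtain ⟨r, Qb, he⟩ := hen
      cases he with
      | parL e _ =>
          exact ⟨r, _, .parL e (fun h' => nomatch h')⟩
      | parR e _ =>
          obtain ⟨r', Qb', e'⟩ := ih hA.2 (not_mem_right hl) ⟨r, _, e⟩ hout hinp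
          exact ⟨r', _, .parR e' (fun h' => nomatch h')⟩
  | commLR h1 h2 ih1 ih2 =>
      intro hA hl hen _ _
      have hs' := inp_role h2 _ _ rfl
      have hsl : ∀ s', s' ∈ rolesList _ → s' ≠ l := fun s' hm heq =>
        (not_mem_right hl) (heq ▸ hm)
      obtain ⟨r, Qb, he⟩ := hen
      cases he with
      | parL e _ =>
          obtain ⟨r', Qb', e'⟩ := ih1 hA.1 (not_mem_left hl) ⟨r, _, e⟩
            (by intro r0 heq; cases heq; exact hsl _ hs' rfl)
            (fun h' => nomatch h')
          exact ⟨r', _, .parL e' (fun h' => nomatch h')⟩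
      | parR e _ =>
          obtain ⟨r', Qb', e'⟩ := ih2 hA.2 (not_mem_right hl) ⟨r, _, e⟩
            (fun _ h' => nomatch h')
            (by intro heq; cases heq; exact hsl _ hs' rfl)
          exact ⟨r', _, .parR e' (fun h' => nomatch h')⟩
  | commRL h1 h2 ih1 ih2 =>
      intro hA hl hen _ _
      have hs' := inp_role h1 _ _ rfl
      have hsl : ∀ s', s' ∈ rolesList _ → s' ≠ l := fun s' hm heq =>
        (not_mem_left hl) (heq ▸ hm)
      obtain ⟨r, Qb, he⟩ := hen
      cases he with
      | parL e _ =>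
          obtain ⟨r', Qb', e'⟩ := ih1 hA.1 (not_mem_left hl) ⟨r, _, e⟩
            (fun _ h' => nomatch h')
            (by intro heq; cases heq; exact hsl _ hs' rfl)
          exact ⟨r', _, .parL e' (fun h' => nomatch h')⟩
      | parR e _ =>
          obtain ⟨r', Qb', e'⟩ := ih2 hA.2 (not_mem_right hl) ⟨r, _, e⟩
            (by intro r0 heq; cases heq; exact hsl _ hs' rfl)
            (fun h' => nomatch h')
          exact ⟨r', _, .parR e' (fun h' => nomatch h')⟩
  | parTick h1 h2 ih1 ih2 =>
      intro hA hl hen _ _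
      obtain ⟨r, Qb, he⟩ := hen
      cases he with
      | parL e _ =>
          obtain ⟨r', Qb', e'⟩ := ih1 hA.1 (not_mem_left hl) ⟨r, _, e⟩
            (fun _ h' => nomatch h') (fun h' => nomatch h')
          exact ⟨r', _, .parL e' (fun h' => nomatch h')⟩
      | parR e _ =>
          obtain ⟨r', Qb', e'⟩ := ih2 hA.2 (not_mem_right hl) ⟨r, _, e⟩
            (fun _ h' => nomatch h') (fun h' => nomatch h')
          exact ⟨r', _, .parR e' (fun h' => nomatch h')⟩

lemma no_tick {b : AName} {l : Role} : ∀ {Q : Sys}, AllOP Q →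
    (∃ r Qb, SStep Q (.out b r l) Qb) → ∀ {Q'}, SStep Q .tick Q' → False := by
  intro Q
  induction Q with
  | atom C r0 =>
      intro hA hen Q' ht
      obtain ⟨r, Qb, he⟩ := hen
      cases he with
      | atomOut h2 =>
          cases ht with
          | atomTick h3 =>
              exact ((show OutputPersistent _ from hA) _ (.refl _) b l ⟨_, h2⟩).1 ⟨_, h3⟩
  | par Q1 Q2 ih1 ih2 =>
      intro hA hen Q' ht
      obtain ⟨r, Qb, he⟩ := hen
      cases ht with
      | parTick t1 t2 =>
          cases he with
          | parL e _ => exact ih1 hA.1 ⟨r, _, e⟩ t1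
          | parR e _ => exact ih2 hA.2 ⟨r, _, e⟩ t2
      | parL _ hne => exact hne rfl
      | parR _ hne => exact hne rfl

/-- Invariant witnessing that a pending output `b̄` towards role `l` blocks
success forever. -/
def Jinv (a b : AName) (l : Role) (S : Sys) : Prop :=
  ∃ D Q, S = .par (.atom D l) Q ∧ AllOP Q ∧ l ∉ rolesList Q ∧
    (D = .inp a ∨ D = .one) ∧ ∃ r Qb, SStep Q (.out b r l) Qb

lemma reach_trans : ∀ {P Q R : Sys}, Reach P Q → Reach Q R → Reach P R := by
  intro P Q R h1
  induction h1 with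
  | refl _ => exact fun h => h
  | step hs _ ih => exact fun h => .step hs (ih h)

lemma reach_snoc {P Q R : Sys} (h1 : Reach P Q) (h2 : CompleteStep Q R) : Reach P R :=
  reach_trans h1 (.step h2 (.refl _))

lemma Jinv_step {a b : AName} {l : Role} (hab : a ≠ b) {S S' : Sys}
    (hJ : Jinv a b l S) (hst : CompleteStep S S') : Jinv a b l S' := by
  obtain ⟨D, Q, rfl, hA, hl, hD, hen⟩ := hJ
  rcases hst with ht | ⟨a', r', s', ht⟩
  · cases ht with
    | parL h _ =>
        cases h with
        | atomTau h2 =>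
            rcases hD with rfl | rfl
            · cases h2
            · cases h2
    | parR h _ =>
        exact ⟨D, _, rfl, allop_sstep h hA, (roles_sstep h) ▸ hl, hD,
          out_pres h hA hl hen (fun _ h' => nomatch h') (fun h' => nomatch h')⟩
  · cases ht with
    | parL h _ => cases h
    | parR h _ =>
        exact ⟨D, _, rfl, allop_sstep h hA, (roles_sstep h) ▸ hl, hD,
          out_pres h hA hl hen (fun _ h' => nomatch h') (fun h' => nomatch h')⟩
    | commLR hP hQ =>
        cases hP with
        | atomOut h2 =>
            rcases hD with rfl | rfl
            · cases h2
            · cases h2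
    | commRL hP hQ =>
        cases hP with
        | atomInp h2 =>
            rcases hD with rfl | rfl
            · cases h2 with
              | inp =>
                  exact ⟨.one, _, rfl, allop_sstep hQ hA, (roles_sstep hQ) ▸ hl, Or.inr rfl,
                    out_pres hQ hA hl hen
                      (by intro r0 heq; cases heq; exact hab rfl)
                      (fun h' => nomatch h')⟩
            · cases h2

lemma Jinv_reach {a b : AName} {l : Role} (hab : a ≠ b) :
    ∀ {S S' : Sys}, Reach S S' → Jinv a b l S → Jinv a b l S' := by
  intro S S' h
  induction h with
  | refl _ => exact fun h => h
  | step hs _ ih => exact fun hJ => ih (Jinv_step hab hJ hs)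

lemma Jinv_notick {a b : AName} {l : Role} {S : Sys} (hJ : Jinv a b l S)
    (ht : CanTick S) : False := by
  obtain ⟨D, Q, rfl, hA, hl, hD, hen⟩ := hJ
  obtain ⟨S'', ht⟩ := ht
  cases ht with
  | parTick t1 t2 => exact no_tick hA hen t2
  | parL _ hne => exact hne rfl
  | parR _ hne => exact hne rfl

lemma no_b {a b : AName} {l : Role} {root S : Sys} (hab : a ≠ b)
    (hC : Correct root) (hre : Reach root S) (hJ : Jinv a b l S) : False := by
  obtain ⟨S'', h1, h2⟩ := hC S hre
  exact Jinv_notick (Jinv_reach hab h1 hJ) h2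

lemma shape_one {l : Role} : ∀ {O O'' : Sys}, Reach O O'' →
    ∀ Q, O = .par (.atom .one l) Q → ∃ Q'', O'' = .par (.atom .one l) Q'' := by
  intro O O'' hr
  induction hr with
  | refl P => exact fun Q hQ => ⟨Q, hQ⟩
  | step hst hr ih =>
      intro Q hQ; subst hQ
      rcases hst with ht | ⟨a', r', s', ht⟩
      · cases ht with
        | parL h _ => cases h with | atomTau h2 => cases h2
        | parR h _ => exact ih _ rfl
      · cases ht with
        | parL h _ => cases h
        | parR h _ => exact ih _ rfl
        | commLR hP hQ2 => cases hP with | atomOut h2 => cases h2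
        | commRL hP hQ2 => cases hP with | atomInp h2 => cases h2

lemma one_sim {l : Role} : ∀ {O O'' : Sys}, Reach O O'' →
    ∀ Q, O = .par (.atom .one l) Q →
    ∃ Q'', O'' = .par (.atom .one l) Q'' := shape_one

lemma notick_inp {a : AName} {l : Role} {Q : Sys}
    (h : CanTick (.par (.atom (.inp a) l) Q)) : False := by
  obtain ⟨S'', ht⟩ := h
  cases ht with
  | parTick t1 t2 => cases t1 with | atomTick h2 => cases h2
  | parL _ hne => exact hne rfl
  | parR _ hne => exact hne rfl

lemma sim {a b : AName} {l : Role} :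
    ∀ {O O'' : Sys}, Reach O O'' → ∀ Q, O = .par (.atom (.inp a) l) Q →
      ∃ Q'', ((O'' = .par (.atom (.inp a) l) Q'' ∧
          Reach (.par (.atom (.choice (.inp a) (.inp b)) l) Q)
            (.par (.atom (.choice (.inp a) (.inp b)) l) Q'')) ∨
        (O'' = .par (.atom .one l) Q'' ∧
          Reach (.par (.atom (.choice (.inp a) (.inp b)) l) Q)
            (.par (.atom .one l) Q''))) := by
  intro O O'' hr
  induction hr with
  | refl P => exact fun Q hQ => ⟨Q, Or.inl ⟨hQ, .refl _⟩⟩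
  | step hst hr ih =>
      intro Q hQ; subst hQ
      rcases hst with ht | ⟨a', r', s', ht⟩
      · cases ht with
        | parL h _ =>
            cases h with | atomTau h2 => cases h2
        | parR h hne =>
            obtain ⟨Q'', hcase⟩ := ih _ rfl
            refine ⟨Q'', ?_⟩
            have hstep : CompleteStep (.par (.atom (.choice (.inp a) (.inp b)) l) Q)
                (.par (.atom (.choice (.inp a) (.inp b)) l) _) :=
              Or.inl (.parR h (fun h' => nomatch h'))
            rcases hcase with ⟨h1, h2⟩ | ⟨h1, h2⟩
            · exact Or.inl ⟨h1, .step hstep h2⟩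
            · exact Or.inr ⟨h1, .step hstep h2⟩
      · cases ht with
        | parL h _ => cases h
        | parR h hne =>
            obtain ⟨Q'', hcase⟩ := ih _ rfl
            refine ⟨Q'', ?_⟩
            have hstep : CompleteStep (.par (.atom (.choice (.inp a) (.inp b)) l) Q)
                (.par (.atom (.choice (.inp a) (.inp b)) l) _) :=
              Or.inr ⟨a', r', s', .parR h hne⟩
            rcases hcase with ⟨h1, h2⟩ | ⟨h1, h2⟩
            · exact Or.inl ⟨h1, .step hstep h2⟩
            · exact Or.inr ⟨h1, .step hstep h2⟩
        | commLR hP hQ2 => cases hP with | atomOut h2 => cases h2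
        | commRL hP hQ2 =>
            cases hP with
            | atomInp h2 =>
                cases h2 with
                | inp =>
                    obtain ⟨Q'', hO''⟩ := shape_one hr _ rfl
                    refine ⟨Q'', Or.inr ⟨hO'', ?_⟩⟩
                    have hstep : CompleteStep (.par (.atom (.choice (.inp a) (.inp b)) l) Q)
                        (.par (.atom .one l) _) :=
                      Or.inr ⟨a, r', l, .commRL (.atomInp (.choiceL .inp)) hQ2⟩
                    rw [← hO'']
                    exact .step hstep hr

/-- Invariant on the reachable states of the modified system. -/
def NInv (a b : AName) (l : Role) (root : Sys) (S : Sys) : Prop :=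
  ∃ Q, AllOP Q ∧ l ∉ rolesList Q ∧
    ((S = .par (.atom (.choice (.inp a) (.inp b)) l) Q ∧
        Reach root (.par (.atom (.inp a) l) Q)) ∨
     (S = .par (.atom .one l) Q ∧ Reach root (.par (.atom .one l) Q)))

lemma NInv_step {a b : AName} {l : Role} {root : Sys} (hab : a ≠ b)
    (hC : Correct root) {S S' : Sys} (hI : NInv a b l root S)
    (hst : CompleteStep S S') : NInv a b l root S' := by
  obtain ⟨Q, hA, hl, hcase⟩ := hI
  rcases hcase with ⟨rfl, hre⟩ | ⟨rfl, hre⟩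
  · rcases hst with ht | ⟨a', r', s', ht⟩
    · cases ht with
      | parL h _ =>
          cases h with
          | atomTau h2 =>
              cases h2 with
              | choiceL h3 => cases h3
              | choiceR h3 => cases h3
      | parR h _ =>
          exact ⟨_, allop_sstep h hA, (roles_sstep h) ▸ hl,
            Or.inl ⟨rfl, reach_snoc hre (Or.inl (.parR h (fun h' => nomatch h')))⟩⟩
    · cases ht with
      | parL h _ => cases h
      | parR h hne =>
          exact ⟨_, allop_sstep h hA, (roles_sstep h) ▸ hl,
            Or.inl ⟨rfl, reach_snoc hre (Or.inr ⟨a', r', s', .parR h hne⟩)⟩⟩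
      | commLR hP hQ2 =>
          cases hP with
          | atomOut h2 =>
              cases h2 with
              | choiceL h3 => cases h3
              | choiceR h3 => cases h3
      | commRL hP hQ2 =>
          cases hP with
          | atomInp h2 =>
              cases h2 with
              | choiceL h3 =>
                  cases h3 with
                  | inp =>
                      exact ⟨_, allop_sstep hQ2 hA, (roles_sstep hQ2) ▸ hl,
                        Or.inr ⟨rfl, reach_snoc hre
                          (Or.inr ⟨a, r', l, .commRL (.atomInp .inp) hQ2⟩)⟩⟩
              | choiceR h3 =>
                  cases h3 with
                  | inp =>
                      exact absurd (no_b hab hC hre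
                        ⟨.inp a, Q, rfl, hA, hl, Or.inl rfl, ⟨r', _, hQ2⟩⟩) (fun h => h)
  · rcases hst with ht | ⟨a', r', s', ht⟩
    · cases ht with
      | parL h _ => cases h with | atomTau h2 => cases h2
      | parR h _ =>
          exact ⟨_, allop_sstep h hA, (roles_sstep h) ▸ hl,
            Or.inr ⟨rfl, reach_snoc hre (Or.inl (.parR h (fun h' => nomatch h')))⟩⟩
    · cases ht with
      | parL h _ => cases h
      | parR h hne =>
          exact ⟨_, allop_sstep h hA, (roles_sstep h) ▸ hl,
            Or.inr ⟨rfl, reach_snoc hre (Or.inr ⟨a', r', s', .parR h hne⟩)⟩⟩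
      | commLR hP hQ2 => cases hP with | atomOut h2 => cases h2
      | commRL hP hQ2 => cases hP with | atomInp h2 => cases h2

lemma NInv_reach {a b : AName} {l : Role} {root : Sys} (hab : a ≠ b)
    (hC : Correct root) : ∀ {S S' : Sys}, Reach S S' →
    NInv a b l root S → NInv a b l root S' := by
  intro S S' h
  induction h with
  | refl _ => exact fun h => h
  | step hs _ ih => exact fun hI => ih (NInv_step hab hC hI hs)

/-- External choices on inputs can be extended under the
subcontract relation for output persistent contracts: `a+b ⪯ a` for any
distinct input action names `a` and `b`. -/
theorem input_choice_extension (a b : AName) (hab : a ≠ b) :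
    Subcontract (.choice (.inp a) (.inp b)) (.inp a) := by
  intro l hl P hOP hWF hlP hC
  intro S' hreach
  have hInv : NInv a b l (.par (.atom (.inp a) l) P) S' :=
    NInv_reach hab hC hreach ⟨P, hOP, hlP, Or.inl ⟨rfl, .refl _⟩⟩
  obtain ⟨Q, hA, hlQ, hcase⟩ := hInv
  rcases hcase with ⟨rfl, hre⟩ | ⟨rfl, hre⟩
  · obtain ⟨O'', hro, htick⟩ := hC _ hre
    obtain ⟨Q'', hcase2⟩ := sim (b := b) hro Q rfl
    rcases hcase2 with ⟨hEq, hNew⟩ | ⟨hEq, hNew⟩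
    · exact absurd (hEq ▸ htick) (fun h => notick_inp h)
    · exact ⟨_, hNew, hEq ▸ htick⟩
  · obtain ⟨O'', hro, htick⟩ := hC _ hre
    exact ⟨O'', hro, htick⟩
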